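/- Transform of the conformable derivative: for α ∈ (0,1] and f differentiable on (0,∞) with right limit f(0) at 0, if e^{−s t^α/α} f(t) → 0 as t → ∞ and the relevant integrals converge absolutely, then L_α[T_α f](s) = s L_α[f](s) − f(0). -/

import Mathlib

open MeasureTheory Filter Topology

/-- Conformable Laplace transform of the conformable derivative:
`L_α[T_α f](s) = s L_α[f](s) − f(0)`. -/
theorem conformable_laplace_deriv (α : ℝ) (hα0 : 0 < α) (hα1 : α ≤ 1)
    (f : ℝ → ℝ) (s : ℝ) (f0 : ℝ)
    (hdiff : ∀ t > 0, DifferentiableAt ℝ f t)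
    (hlim0 : Tendsto f (𝓝[>] (0 : ℝ)) (𝓝 f0))
    (hlim : Tendsto (fun t : ℝ => Real.exp (-s * t ^ α / α) * f t) atTop (𝓝 0))
    (hint1 : IntegrableOn
      (fun t : ℝ => Real.exp (-s * t ^ α / α) * f t * t ^ (α - 1))
      (Set.Ioi (0 : ℝ)))
    (hint2 : IntegrableOn
      (fun t : ℝ => Real.exp (-s * t ^ α / α) * (t ^ (1 - α) * deriv f t) * t ^ (α - 1))
      (Set.Ioi (0 : ℝ))) :
    ∫ t in Set.Ioi (0 : ℝ),
        Real.exp (-s * t ^ α / α) * (t ^ (1 - α) * deriv f t) * t ^ (α - 1)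
      = s * (∫ t in Set.Ioi (0 : ℝ),
          Real.exp (-s * t ^ α / α) * f t * t ^ (α - 1)) - f0 := by
  set E : ℝ → ℝ := fun t => Real.exp (-s * t ^ α / α) with hE
  set G : ℝ → ℝ := fun t => if 0 < t then E t * f t else f0 with hG
  set G' : ℝ → ℝ := fun t =>
    E t * (t ^ (1 - α) * deriv f t) * t ^ (α - 1) - s * (E t * f t * t ^ (α - 1)) with hG'
  -- key algebraic fact: t^(1-α) * t^(α-1) = 1 for t > 0
  have hpow : ∀ t : ℝ, 0 < t → t ^ (1 - α) * t ^ (α - 1) = 1 := by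
    intro t ht
    rw [← Real.rpow_add ht]
    norm_num
  -- G equals E * f on Ioi 0 eventually around each point of Ioi 0
  have hGeq : ∀ t : ℝ, 0 < t → G =ᶠ[𝓝 t] fun u => E u * f u := by
    intro t ht
    filter_upwards [Ioi_mem_nhds ht] with u hu
    simp [hG, Set.mem_Ioi.mp hu]
  have hderiv : ∀ t ∈ Set.Ioi (0 : ℝ), HasDerivAt G (G' t) t := by
    intro t ht
    have ht' : (0 : ℝ) < t := ht
    have hne : t ≠ 0 := ne_of_gt ht'
    -- derivative of -s * t^α / α
    have h1 : HasDerivAt (fun u : ℝ => -s * u ^ α / α) (-s * t ^ (α - 1)) t := by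
      have := (Real.hasDerivAt_rpow_const (p := α) (Or.inl hne))
      have h2 := this.const_mul (-s)
      have h3 := h2.div_const α
      exact h3.congr_deriv (by rw [mul_div_assoc, mul_div_cancel_left₀ _ hα0.ne'])
    have hEder : HasDerivAt E (E t * (-s * t ^ (α - 1))) t := by
      simpa [hE, mul_comm] using h1.exp
    have hfd := (hdiff t ht').hasDerivAt
    have hmul := hEder.mul hfd
    have : HasDerivAt (fun u => E u * f u)
        (E t * (-s * t ^ (α - 1)) * f t + E t * deriv f t) t := hmul
    have hGG : HasDerivAt G (E t * (-s * t ^ (α - 1)) * f t + E t * deriv f t) t :=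
      this.congr_of_eventuallyEq (hGeq t ht')
    convert hGG using 1
    have h4 : E t * (t ^ (1 - α) * deriv f t) * t ^ (α - 1) = E t * deriv f t := by
      have := hpow t ht'
      calc E t * (t ^ (1 - α) * deriv f t) * t ^ (α - 1)
          = E t * deriv f t * (t ^ (1 - α) * t ^ (α - 1)) := by ring
        _ = E t * deriv f t := by rw [this, mul_one]
    show E t * (t ^ (1 - α) * deriv f t) * t ^ (α - 1) - s * (E t * f t * t ^ (α - 1)) = _
    rw [h4]
    ring
  have hG'int : IntegrableOn G' (Set.Ioi (0 : ℝ)) := hint2.sub (hint1.const_mul s)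
  have hEcont : ContinuousAt E 0 := by
    have h1 : ContinuousAt (fun t : ℝ => t ^ α) 0 :=
      Real.continuousAt_rpow_const 0 α (Or.inr hα0.le)
    exact (Real.continuous_exp.continuousAt).comp
      (((h1.const_mul (-s)).div_const α))
  have hE0 : E 0 = 1 := by
    simp [hE, Real.zero_rpow hα0.ne']
  have htend : Tendsto G (𝓝[>] (0:ℝ)) (𝓝 f0) := by
    have h2 : Tendsto (fun t => E t * f t) (𝓝[>] (0:ℝ)) (𝓝 (E 0 * f0)) :=
      (hEcont.continuousWithinAt.tendsto).mul hlim0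
    rw [hE0, one_mul] at h2
    apply h2.congr'
    filter_upwards [self_mem_nhdsWithin] with t ht
    exact (if_pos (Set.mem_Ioi.mp ht)).symm
  have hcont : ContinuousWithinAt G (Set.Ici (0 : ℝ)) 0 := by
    rw [ContinuousWithinAt]
    have hG0 : G 0 = f0 := by simp [hG]
    rw [hG0, ← Set.Ioi_insert, nhdsWithin_insert]
    rw [tendsto_sup]
    refine ⟨?_, htend⟩
    rw [tendsto_pure_left]
    intro u hu
    rw [hG0]
    exact mem_of_mem_nhds hu
  have hGtop : Tendsto G atTop (𝓝 0) := by
    apply hlim.congr'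
    filter_upwards [Ioi_mem_atTop (0:ℝ)] with t ht
    exact (if_pos (Set.mem_Ioi.mp ht)).symm
  have key := integral_Ioi_of_hasDerivAt_of_tendsto hcont hderiv hG'int hGtop
  have hG0 : G 0 = f0 := by simp [hG]
  rw [hG0] at key
  -- key : ∫ t in Ioi 0, G' t = 0 - f0
  have hsplit : ∫ t in Set.Ioi (0:ℝ), G' t
      = (∫ t in Set.Ioi (0:ℝ), E t * (t ^ (1 - α) * deriv f t) * t ^ (α - 1))
        - s * ∫ t in Set.Ioi (0:ℝ), E t * f t * t ^ (α - 1) := by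
    rw [hG']
    rw [integral_sub hint2 (hint1.const_mul s), integral_const_mul]
  rw [hsplit] at key
  linarith [key]
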